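/- The load-balancing two-sided facility location game has the finite improvement property: every sequence of strictly improving relocations by facility agents (each evaluated at the unique client-equilibrium loads) is finite. This follows because the sorted (increasing) vector of facility equilibrium loads is an ordinal potential function that lexicographically strictly increases with every improving move, and loads take only finitely many possible values x/y with x ≤ total client weight and 1 ≤ y ≤ k. -/

import Mathlib

open Finset

/-- Load of facility `j` under weight distribution `σ`. -/
def load {n k : ℕ} (σ : Fin n → Fin k → ℝ) (j : Fin k) : ℝ := ∑ i, σ i j

/-- A feasible client weight distribution: nonnegative, supported on accessible
facilities, and clients with a nonempty accessible set distribute their full weight. -/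
def Feasible {n k : ℕ} (w : Fin n → ℝ) (N : Fin n → Finset (Fin k))
    (σ : Fin n → Fin k → ℝ) : Prop :=
  (∀ i j, 0 ≤ σ i j) ∧
  (∀ i j, j ∉ N i → σ i j = 0) ∧
  (∀ i, (N i).Nonempty → ∑ j ∈ N i, σ i j = w i)

/-- Client equilibrium: no client puts positive weight on a facility while a
strictly less loaded accessible facility exists. -/
def ClientEq {n k : ℕ} (w : Fin n → ℝ) (N : Fin n → Finset (Fin k))
    (σ : Fin n → Fin k → ℝ) : Prop :=
  Feasible w N σ ∧
  ∀ i : Fin n, ∀ j ∈ N i, ∀ j' ∈ N i, 0 < σ i j → load σ j ≤ load σ j'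

/-- Facilities accessible to client `i` under placement `s`. -/
def NsF {n k : ℕ} (E : Fin n → Fin n → Bool) (s : Fin k → Fin n) (i : Fin n) :
    Finset (Fin k) :=
  Finset.univ.filter (fun j => s j = i ∨ E i (s j) = true)

lemma mem_of_pos {n k : ℕ} (w : Fin n → ℝ) (N : Fin n → Finset (Fin k))
    (σ : Fin n → Fin k → ℝ) (h : Feasible w N σ) (i : Fin n) (q : Fin k)
    (hq : 0 < σ i q) : q ∈ N i := by
  by_contra hc; rw [h.2.1 i q hc] at hq; exact lt_irrefl 0 hq

lemma total_weight {n k : ℕ} (w : Fin n → ℝ) (N : Fin n → Finset (Fin k))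
    (σ : Fin n → Fin k → ℝ) (h : Feasible w N σ) (i : Fin n)
    (hne : (N i).Nonempty) : ∑ j, σ i j = w i := by
  have h2 : ∑ j, σ i j = ∑ j ∈ N i, σ i j := by
    symm; apply Finset.sum_subset (Finset.subset_univ _)
    intro j _ hj; exact h.2.1 i j hj
  rw [h2, h.2.2 i hne]

lemma full_weight {n k : ℕ} (w : Fin n → ℝ) (N : Fin n → Finset (Fin k))
    (σ : Fin n → Fin k → ℝ) (h : Feasible w N σ) (i : Fin n)
    (hne : (N i).Nonempty) (D : Finset (Fin k)) (hD : ∀ j, 0 < σ i j → j ∈ D) :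
    ∑ j ∈ D, σ i j = w i := by
  have h1 : ∑ j ∈ D, σ i j = ∑ j, σ i j := by
    apply Finset.sum_subset (Finset.subset_univ D)
    intro j _ hj
    by_contra hc
    exact hj (hD j (lt_of_le_of_ne (h.1 i j) (Ne.symm hc)))
  rw [h1, total_weight w N σ h i hne]

lemma sum_le_weight {n k : ℕ} (w : Fin n → ℝ) (N : Fin n → Finset (Fin k))
    (σ : Fin n → Fin k → ℝ) (h : Feasible w N σ) (i : Fin n)
    (hne : (N i).Nonempty) (D : Finset (Fin k)) :
    ∑ j ∈ D, σ i j ≤ w i := by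
  rw [← total_weight w N σ h i hne]
  exact Finset.sum_le_sum_of_subset_of_nonneg (Finset.subset_univ D)
    (fun j _ _ => h.1 i j)

/-- Every equilibrium load is of the form x/y with x ≤ total weight, 1 ≤ y ≤ k. -/
lemma load_form {n k : ℕ} (w : Fin n → ℕ) (N : Fin n → Finset (Fin k))
    (σ : Fin n → Fin k → ℝ) (h : ClientEq (fun i => (w i : ℝ)) N σ) (j : Fin k) :
    ∃ x y : ℕ, x ≤ ∑ i, w i ∧ 1 ≤ y ∧ y ≤ k ∧ load σ j = (x : ℝ) / y := by
  obtain ⟨hfeas, heq⟩ := h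
  set c := load σ j with hc
  set A : Finset (Fin k) := Finset.univ.filter (fun j' => load σ j' = c) with hA
  have hjA : j ∈ A := by simp [hA, hc]
  set I : Finset (Fin n) := Finset.univ.filter (fun i => 0 < ∑ j' ∈ A, σ i j') with hI
  have hIw : ∀ i ∈ I, ∑ j' ∈ A, σ i j' = (w i : ℝ) := by
    intro i hi
    rw [hI, Finset.mem_filter] at hi
    obtain ⟨q, hqA, hq⟩ : ∃ q ∈ A, 0 < σ i q := by
      by_contra hcon
      push_neg at hcon
      have : ∑ j' ∈ A, σ i j' ≤ 0 := Finset.sum_nonpos (fun j' hj' => hcon j' hj')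
      linarith [hi.2]
    have hqN := mem_of_pos _ N σ hfeas i q hq
    refine full_weight _ N σ hfeas i ⟨q, hqN⟩ A ?_
    intro j' hj'
    have hjN := mem_of_pos _ N σ hfeas i j' hj'
    have h1 := heq i q hqN j' hjN hq
    have h2 := heq i j' hjN q hqN hj'
    have hqc : load σ q = c := by
      rw [hA, Finset.mem_filter] at hqA; exact hqA.2
    rw [hA, Finset.mem_filter]
    exact ⟨Finset.mem_univ _, by linarith⟩
  have hIzero : ∀ i ∈ (Finset.univ : Finset (Fin n)), i ∉ I → ∑ j' ∈ A, σ i j' = 0 := by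
    intro i _ hi
    rw [hI, Finset.mem_filter] at hi
    push_neg at hi
    have h1 : ∑ j' ∈ A, σ i j' ≤ 0 := hi (Finset.mem_univ i)
    have h2 : 0 ≤ ∑ j' ∈ A, σ i j' := Finset.sum_nonneg (fun j' _ => hfeas.1 i j')
    linarith
  have hsum : (A.card : ℝ) * c = ∑ i ∈ I, (w i : ℝ) := by
    have hAc : ∑ j' ∈ A, load σ j' = (A.card : ℝ) * c := by
      rw [Finset.sum_congr rfl (fun j' hj' => (Finset.mem_filter.mp hj').2)]
      simp [mul_comm]
      exact Or.inl rfl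
    rw [← hAc]
    unfold load
    rw [Finset.sum_comm]
    rw [← Finset.sum_subset (Finset.subset_univ I) hIzero]
    exact Finset.sum_congr rfl hIw
  refine ⟨∑ i ∈ I, w i, A.card, ?_, ?_, ?_, ?_⟩
  · exact Finset.sum_le_sum_of_subset (Finset.subset_univ I)
  · exact Finset.card_pos.mpr ⟨j, hjA⟩
  · simpa using Finset.card_le_card (Finset.subset_univ A)
  · have hcard : (0:ℝ) < A.card := by
      exact_mod_cast Finset.card_pos.mpr ⟨j, hjA⟩
    rw [eq_div_iff (ne_of_gt hcard)]
    push_cast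
    rw [← hsum]; ring

/-- Key lemma: after an improving move by p, any facility with new load below p's
new load did not lose load. -/
lemma key_lemma {n k : ℕ} (w : Fin n → ℝ) (N N' : Fin n → Finset (Fin k))
    (σ σ' : Fin n → Fin k → ℝ) (p : Fin k)
    (h : ClientEq w N σ) (h' : ClientEq w N' σ')
    (hN : ∀ i : Fin n, ∀ j : Fin k, j ≠ p → (j ∈ N i ↔ j ∈ N' i)) :
    ∀ q, load σ' q < load σ' p → load σ q ≤ load σ' q := by
  by_contra hcon
  push_neg at hcon
  obtain ⟨q0, hq01, hq02⟩ := hcon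
  set V : Finset (Fin k) := Finset.univ.filter
    (fun q => load σ' q < load σ' p ∧ load σ' q < load σ q) with hV
  have hVne : V.Nonempty := ⟨q0, by rw [hV, Finset.mem_filter]; exact ⟨Finset.mem_univ _, hq01, hq02⟩⟩
  obtain ⟨m, hmV, hmin⟩ := V.exists_min_image (fun q => load σ' q) hVne
  rw [hV, Finset.mem_filter] at hmV
  set c := load σ' m with hcdef
  have hcp : c < load σ' p := hmV.2.1
  set D : Finset (Fin k) := Finset.univ.filter
    (fun j => load σ' j ≤ c ∧ c < load σ j) with hD
  have hmD : m ∈ D := by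
    rw [hD, Finset.mem_filter]
    exact ⟨Finset.mem_univ _, le_refl _, hmV.2.2⟩
  have hclient : ∀ i : Fin n, ∑ j ∈ D, σ i j ≤ ∑ j ∈ D, σ' i j := by
    intro i
    by_cases hcase : ∃ q ∈ D, 0 < σ i q
    · obtain ⟨q, hqD, hq⟩ := hcase
      rw [hD, Finset.mem_filter] at hqD
      have hqp : q ≠ p := by
        rintro rfl; linarith [hqD.2.1]
      have hqN : q ∈ N i := mem_of_pos _ N σ h.1 i q hq
      have hqN' : q ∈ N' i := (hN i q hqp).mp hqN
      have hall : ∀ j, 0 < σ' i j → j ∈ D := by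
        intro j hj
        have hjN' : j ∈ N' i := mem_of_pos _ N' σ' h'.1 i j hj
        have h1 : load σ' j ≤ load σ' q := h'.2 i j hjN' q hqN' hj
        have h2 : load σ' j ≤ c := le_trans h1 hqD.2.1
        have hjp : j ≠ p := by rintro rfl; linarith
        have hjN : j ∈ N i := (hN i j hjp).mpr hjN'
        have h3 : load σ q ≤ load σ j := h.2 i q hqN j hjN hq
        have h4 : c < load σ j := lt_of_lt_of_le hqD.2.2 h3
        rw [hD, Finset.mem_filter]
        exact ⟨Finset.mem_univ _, h2, h4⟩
      have hR : ∑ j ∈ D, σ' i j = w i :=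
        full_weight w N' σ' h'.1 i ⟨q, hqN'⟩ D hall
      have hL : ∑ j ∈ D, σ i j ≤ w i :=
        sum_le_weight w N σ h.1 i ⟨q, hqN⟩ D
      linarith
    · push_neg at hcase
      have hL : ∑ j ∈ D, σ i j ≤ 0 := Finset.sum_nonpos (fun j hj => hcase j hj)
      have hR : 0 ≤ ∑ j ∈ D, σ' i j := Finset.sum_nonneg (fun j _ => h'.1.1 i j)
      linarith
  have hsum : ∑ j ∈ D, load σ j ≤ ∑ j ∈ D, load σ' j := by
    have e1 : ∑ j ∈ D, load σ j = ∑ i, ∑ j ∈ D, σ i j := Finset.sum_comm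
    have e2 : ∑ j ∈ D, load σ' j = ∑ i, ∑ j ∈ D, σ' i j := Finset.sum_comm
    rw [e1, e2]
    exact Finset.sum_le_sum (fun i _ => hclient i)
  have hstrict : ∑ j ∈ D, load σ' j < ∑ j ∈ D, load σ j := by
    apply Finset.sum_lt_sum_of_nonempty ⟨m, hmD⟩
    intro j hj
    rw [hD, Finset.mem_filter] at hj
    exact lt_of_le_of_lt hj.2.1 hj.2.2
  linarith

/-- Finite improvement property: there is no infinite sequence of facility
placement profiles together with client equilibria in which every step is a
strictly improving relocation by some facility. -/
theorem finite_improvement_property (n k : ℕ)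
    (w : Fin n → ℕ) (hw : ∀ i, 0 < w i) (E : Fin n → Fin n → Bool) :
    ¬ ∃ (S : ℕ → Fin k → Fin n) (σ : ℕ → Fin n → Fin k → ℝ),
        (∀ t : ℕ, ClientEq (fun i => (w i : ℝ)) (NsF E (S t)) (σ t)) ∧
        (∀ t : ℕ, ∃ (p : Fin k) (v : Fin n),
          S (t + 1) = Function.update (S t) p v ∧
          load (σ t) p < load (σ (t + 1)) p) := by
  rintro ⟨S, σ, hEq, hMove⟩
  obtain ⟨p0, -⟩ := hMove 0
  have hk : 1 ≤ k := p0.pos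
  set W := ∑ i, w i with hW
  set L : Finset ℝ := ((Finset.range (W+1)) ×ˢ (Finset.Icc 1 k)).image
      (fun xy => (xy.1 : ℝ) / xy.2) with hL
  have hmemL : ∀ t j, load (σ t) j ∈ L := by
    intro t j
    obtain ⟨x, y, hx, hy1, hy2, hxy⟩ := load_form w _ (σ t) (hEq t) j
    rw [hL, Finset.mem_image]
    exact ⟨(x, y), Finset.mem_product.mpr ⟨Finset.mem_range.mpr (Nat.lt_succ_of_le hx),
      Finset.mem_Icc.mpr ⟨hy1, hy2⟩⟩, hxy.symm⟩
  set r : ℝ → ℕ := fun v => (L.filter (fun u => v < u)).card with hr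
  have hrmono : ∀ u v : ℝ, u ≤ v → r v ≤ r u := by
    intro u v huv
    apply Finset.card_le_card
    intro x hx
    rw [Finset.mem_filter] at *
    exact ⟨hx.1, lt_of_le_of_lt huv hx.2⟩
  have hrstrict : ∀ u v : ℝ, u < v → v ∈ L → r v < r u := by
    intro u v huv hvL
    apply Finset.card_lt_card
    rw [Finset.ssubset_iff_of_subset]
    · exact ⟨v, Finset.mem_filter.mpr ⟨hvL, huv⟩,
        fun hc => absurd (Finset.mem_filter.mp hc).2 (lt_irrefl v)⟩
    · intro x hx; rw [Finset.mem_filter] at *; exact ⟨hx.1, lt_trans huv hx.2⟩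
  have hK1 : (1:ℤ) ≤ (k:ℤ) + 1 := by linarith [Int.ofNat_nonneg k]
  set f : ℝ → ℤ := fun v => ((k:ℤ)+1)^(r v) with hf
  have hfpos : ∀ v, 1 ≤ f v := fun v => one_le_pow₀ hK1
  set Φ : ℕ → ℤ := fun t => ∑ j, f (load (σ t) j) with hΦ
  have hstep : ∀ t, Φ (t+1) + 1 ≤ Φ t := by
    intro t
    obtain ⟨p, v, hupd, himp⟩ := hMove t
    have hN : ∀ i : Fin n, ∀ j : Fin k, j ≠ p →
        (j ∈ NsF E (S t) i ↔ j ∈ NsF E (S (t+1)) i) := by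
      intro i j hjp
      have hSj : S (t+1) j = S t j := by
        rw [hupd]; exact Function.update_of_ne hjp v (S t)
      simp [NsF, hSj]
    have hkey := key_lemma _ _ _ _ _ p (hEq t) (hEq (t+1)) hN
    set a := load (σ t) p with ha
    set b := load (σ (t+1)) p with hb
    have hbL : b ∈ L := hmemL (t+1) p
    have hrba : r b + 1 ≤ r a := hrstrict a b himp hbL
    set X : ℤ := ((k:ℤ)+1)^(r b) with hX
    have hX1 : 1 ≤ X := one_le_pow₀ hK1
    have hbound : ∀ j ∈ Finset.univ.erase p,
        f (load (σ (t+1)) j) - f (load (σ t) j) ≤ X - 1 := by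
      intro j hj
      by_cases hcase : load (σ t) j ≤ load (σ (t+1)) j
      · have h1 : f (load (σ (t+1)) j) ≤ f (load (σ t) j) :=
          pow_le_pow_right₀ hK1 (hrmono _ _ hcase)
        have h2 := hfpos (load (σ t) j)
        linarith
      · push_neg at hcase
        have hge : b ≤ load (σ (t+1)) j := by
          by_contra hlt; push_neg at hlt
          exact absurd (hkey j hlt) (not_le.mpr hcase)
        have h1 : f (load (σ (t+1)) j) ≤ X :=
          pow_le_pow_right₀ hK1 (hrmono _ _ hge)
        have h2 := hfpos (load (σ t) j)
        linarith
    have hpb : f b - f a ≤ -(k:ℤ) * X := by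
      have h1 : ((k:ℤ)+1)^(r b + 1) ≤ ((k:ℤ)+1)^(r a) :=
        pow_le_pow_right₀ hK1 hrba
      have h2 : ((k:ℤ)+1)^(r b + 1) = ((k:ℤ)+1) * X := by rw [pow_succ]; ring
      have h3 : f a = ((k:ℤ)+1)^(r a) := rfl
      have h4 : f b = X := rfl
      rw [h3, h4]
      linarith
    have hsplit1 : Φ (t+1) = f b + ∑ j ∈ Finset.univ.erase p, f (load (σ (t+1)) j) :=
      (Finset.add_sum_erase _ _ (Finset.mem_univ p)).symm
    have hsplit2 : Φ t = f a + ∑ j ∈ Finset.univ.erase p, f (load (σ t) j) :=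
      (Finset.add_sum_erase _ _ (Finset.mem_univ p)).symm
    have hcard : ((Finset.univ.erase p).card : ℤ) = (k:ℤ) - 1 := by
      rw [Finset.card_erase_of_mem (Finset.mem_univ p)]
      simp
      rw [Nat.cast_sub hk]
      simp
    have hsumb : ∑ j ∈ Finset.univ.erase p, f (load (σ (t+1)) j)
        - ∑ j ∈ Finset.univ.erase p, f (load (σ t) j) ≤ ((k:ℤ) - 1) * (X - 1) := by
      rw [← Finset.sum_sub_distrib]
      calc ∑ j ∈ Finset.univ.erase p, (f (load (σ (t+1)) j) - f (load (σ t) j))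
          ≤ (Finset.univ.erase p).card • (X - 1) :=
            Finset.sum_le_card_nsmul _ _ _ hbound
        _ = ((k:ℤ) - 1) * (X - 1) := by rw [nsmul_eq_mul, hcard]
    have hkZ : (1:ℤ) ≤ (k:ℤ) := by exact_mod_cast hk
    nlinarith [hsplit1, hsplit2, hpb, hsumb]
  have hpos : ∀ t, 0 ≤ Φ t := by
    intro t
    apply Finset.sum_nonneg
    intro j _
    linarith [hfpos (load (σ t) j)]
  have hdesc : ∀ t : ℕ, Φ t + t ≤ Φ 0 := by
    intro t
    induction t with
    | zero => simp
    | succ t ih =>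
      have := hstep t
      push_cast
      push_cast at ih
      linarith
  have h1 := hdesc ((Φ 0).toNat + 1)
  have h2 := hpos ((Φ 0).toNat + 1)
  have h3 : Φ 0 ≤ ((Φ 0).toNat : ℤ) := Int.self_le_toNat _
  push_cast at h1
  linarith
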